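/- Let 𝒪 be an algebra of observables on a nonempty set Ω, let P be an observable probability on the observable sets, and let X ∈ 𝒪. Then there exists a unique Borel probability measure P_X on ℝ such that P_X(U) = P(X⁻¹(U)) for every open set U ⊆ ℝ. -/

import Mathlib

open Filter MeasureTheory Topology

variable {Ω : Type*}

/-- A family `𝒪` of real functions on `Ω` is an algebra of observables: for every `n ≥ 1`,
all `X₁, …, Xₙ ∈ 𝒪` and every `φ` continuous on the image of `(X₁, …, Xₙ)`,
the composite `ω ↦ φ (X₁ ω, …, Xₙ ω)` belongs to `𝒪`. -/
def IsObsAlg (o : Set (Ω → ℝ)) : Prop :=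
  ∀ n : ℕ, 0 < n → ∀ X : Fin n → Ω → ℝ, (∀ i, X i ∈ o) →
    ∀ φ : (Fin n → ℝ) → ℝ,
      ContinuousOn φ (Set.range fun ω => fun i => X i ω) →
      (fun ω => φ fun i => X i ω) ∈ o

/-- `F ⊆ Ω` is a zero set if `F = X⁻¹({0})` for some `X ∈ 𝒪`. -/
def IsZeroSet (o : Set (Ω → ℝ)) (F : Set Ω) : Prop :=
  ∃ X ∈ o, F = X ⁻¹' {0}

/-- A co-zero set is the complement of a zero set. -/
def IsCozeroSet (o : Set (Ω → ℝ)) (U : Set Ω) : Prop :=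
  IsZeroSet o Uᶜ

/-- The observable sets are the zero sets together with the co-zero sets. -/
def IsObsSet (o : Set (Ω → ℝ)) (A : Set Ω) : Prop :=
  IsZeroSet o A ∨ IsCozeroSet o A

/-- An observable probability: additive on disjoint observable sets with observable union,
nonnegative on observable sets, normalized, with monotone convergence along increasing
sequences of co-zero sets whose union is a co-zero set. -/
def IsObsProb (o : Set (Ω → ℝ)) (P : Set Ω → ℝ) : Prop :=
  (∀ A B : Set Ω, IsObsSet o A → IsObsSet o B → Disjoint A B →
    IsObsSet o (A ∪ B) → P (A ∪ B) = P A + P B) ∧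
  (∀ A : Set Ω, IsObsSet o A → 0 ≤ P A) ∧
  (P Set.univ = 1) ∧
  (∀ (U : ℕ → Set Ω) (V : Set Ω), (∀ i, IsCozeroSet o (U i)) → Monotone U →
    IsCozeroSet o V → (⋃ i, U i) = V →
    Tendsto (fun i => P (U i)) atTop (𝓝 (P V)))

/-- `μ` is the distribution of `X` under `P`: a Borel probability measure on `ℝ` with
`μ U = P (X ⁻¹' U)` for every open `U ⊆ ℝ`. -/
def IsDistribution (o : Set (Ω → ℝ)) (P : Set Ω → ℝ) (X : Ω → ℝ)
    (μ : Measure ℝ) : Prop :=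
  IsProbabilityMeasure μ ∧
  ∀ U : Set ℝ, IsOpen U → μ U = ENNReal.ofReal (P (X ⁻¹' U))

/-- Membership in `𝒪^∞`: a bounded member of `𝒪`. -/
def MemBdd (o : Set (Ω → ℝ)) (X : Ω → ℝ) : Prop :=
  X ∈ o ∧ ∃ M : ℝ, ∀ ω, |X ω| ≤ M

/-- The closed algebra `𝒜_X` generated by `X`: all `φ ∘ X` with `φ : ℝ → ℝ` continuous
(equivalent, by Tietze extension, to continuous functions on the closure of the image). -/
def ClosedAlg (X : Ω → ℝ) : Set (Ω → ℝ) :=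
  {Y | ∃ φ : ℝ → ℝ, Continuous φ ∧ Y = φ ∘ X}

/-- Positivity of a functional on `𝒪^∞`. -/
def PositiveFunc (o : Set (Ω → ℝ)) (E : (Ω → ℝ) → ℝ) : Prop :=
  ∀ X, MemBdd o X → (∀ ω, 0 ≤ X ω) → 0 ≤ E X

/-- Quasi-linearity: `E` is linear on each `𝒜_X`, `X ∈ 𝒪^∞`. -/
def QuasiLinear (o : Set (Ω → ℝ)) (E : (Ω → ℝ) → ℝ) : Prop :=
  ∀ X, MemBdd o X → ∀ Y ∈ ClosedAlg X, ∀ Z ∈ ClosedAlg X, ∀ a b : ℝ,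
    E (fun ω => a * Y ω + b * Z ω) = a * E Y + b * E Z

/-- `X ⪯ U` : there is a zero set `F` with `X ≤ 1_F` pointwise and `F ⊆ U`. -/
def PrecU (o : Set (Ω → ℝ)) (X : Ω → ℝ) (U : Set Ω) : Prop :=
  ∃ F : Set Ω, IsZeroSet o F ∧ (∀ ω, X ω ≤ F.indicator (fun _ => (1:ℝ)) ω) ∧ F ⊆ U

/-- An observable expectation: quasi-linear, positive, normalized, with monotone
convergence along increasing sequences in `𝒪^∞` converging pointwise in `𝒪^∞`. -/
def IsObsExp (o : Set (Ω → ℝ)) (E : (Ω → ℝ) → ℝ) : Prop :=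
  QuasiLinear o E ∧ PositiveFunc o E ∧ E (fun _ => 1) = 1 ∧
  (∀ (X : ℕ → Ω → ℝ) (Y : Ω → ℝ), (∀ n, MemBdd o (X n)) → MemBdd o Y →
    (∀ n ω, X n ω ≤ X (n+1) ω) →
    (∀ ω, Tendsto (fun n => X n ω) atTop (𝓝 (Y ω))) →
    Tendsto (fun n => E (X n)) atTop (𝓝 (E Y)))

/-- A quasi-additive probability: axioms (I)-(III) of an observable probability
together with inner regularity (IV'): `P U = sup {P F : F zero set, F ⊆ U}`. -/
def IsQuasiAddProb (o : Set (Ω → ℝ)) (P : Set Ω → ℝ) : Prop :=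
  (∀ A B : Set Ω, IsObsSet o A → IsObsSet o B → Disjoint A B →
    IsObsSet o (A ∪ B) → P (A ∪ B) = P A + P B) ∧
  (∀ A : Set Ω, IsObsSet o A → 0 ≤ P A) ∧
  (P Set.univ = 1) ∧
  (∀ U : Set Ω, IsCozeroSet o U →
    P U = sSup {r | ∃ F : Set Ω, IsZeroSet o F ∧ F ⊆ U ∧ r = P F})

section Aux

variable {o : Set (Ω → ℝ)} {P : Set Ω → ℝ} {X : Ω → ℝ}

lemma comp1_mem (hO : IsObsAlg o) (hX : X ∈ o) {ψ : ℝ → ℝ}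
    (hψ : Continuous ψ) : (fun ω => ψ (X ω)) ∈ o :=
  hO 1 one_pos (fun _ => X) (fun _ => hX) (fun v => ψ (v 0))
    ((hψ.comp (continuous_apply 0)).continuousOn)

lemma comp2_mem (hO : IsObsAlg o) {Y Z : Ω → ℝ} (hY : Y ∈ o) (hZ : Z ∈ o)
    {ψ : ℝ → ℝ → ℝ} (hψ : Continuous fun p : ℝ × ℝ => ψ p.1 p.2) :
    (fun ω => ψ (Y ω) (Z ω)) ∈ o := by
  have hc : Continuous fun v : Fin 2 → ℝ => ψ (v 0) (v 1) := by
    have h1 : Continuous fun v : Fin 2 → ℝ => ((v 0, v 1) : ℝ × ℝ) :=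
      (continuous_apply (0 : Fin 2)).prodMk (continuous_apply (1 : Fin 2))
    exact hψ.comp h1
  have h := hO 2 two_pos ![Y, Z] (fun i => by fin_cases i <;> simpa)
    (fun v => ψ (v 0) (v 1)) hc.continuousOn
  simpa using h

lemma const_mem (hO : IsObsAlg o) (hX : X ∈ o) (c : ℝ) :
    (fun _ : Ω => c) ∈ o := comp1_mem hO hX continuous_const

lemma zeroSet_union (hO : IsObsAlg o) {F G : Set Ω} (hF : IsZeroSet o F)
    (hG : IsZeroSet o G) : IsZeroSet o (F ∪ G) := by
  obtain ⟨Y, hY, rfl⟩ := hF; obtain ⟨Z, hZ, rfl⟩ := hG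
  refine ⟨fun ω => Y ω * Z ω, comp2_mem (ψ := fun a b => a * b) hO hY hZ (continuous_fst.mul continuous_snd), ?_⟩
  ext ω; simp [mul_eq_zero]

lemma zeroSet_inter (hO : IsObsAlg o) {F G : Set Ω} (hF : IsZeroSet o F)
    (hG : IsZeroSet o G) : IsZeroSet o (F ∩ G) := by
  obtain ⟨Y, hY, rfl⟩ := hF; obtain ⟨Z, hZ, rfl⟩ := hG
  refine ⟨fun ω => |Y ω| + |Z ω|,
    comp2_mem (ψ := fun a b => |a| + |b|) hO hY hZ (continuous_fst.abs.add continuous_snd.abs), ?_⟩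
  ext ω
  simp only [Set.mem_inter_iff, Set.mem_preimage, Set.mem_singleton_iff]
  rw [add_eq_zero_iff_of_nonneg (abs_nonneg _) (abs_nonneg _), abs_eq_zero, abs_eq_zero]

lemma zeroSet_empty (hO : IsObsAlg o) (hX : X ∈ o) : IsZeroSet o (∅ : Set Ω) :=
  ⟨fun _ => 1, const_mem hO hX 1, by ext ω; simp⟩

lemma zeroSet_univ (hO : IsObsAlg o) (hX : X ∈ o) : IsZeroSet o (Set.univ : Set Ω) :=
  ⟨fun _ => 0, const_mem hO hX 0, by ext ω; simp⟩

lemma obsSet_compl {A : Set Ω} (hA : IsObsSet o A) : IsObsSet o Aᶜ := by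
  rcases hA with h | h
  · exact Or.inr (by rwa [IsCozeroSet, compl_compl])
  · exact Or.inl h

lemma zeroSet_preimage (hO : IsObsAlg o) (hX : X ∈ o) {C : Set ℝ} (hC : IsClosed C) :
    IsZeroSet o (X ⁻¹' C) := by
  rcases C.eq_empty_or_nonempty with rfl | hne
  · simpa using zeroSet_empty hO hX
  · refine ⟨fun ω => Metric.infDist (X ω) C,
      comp1_mem hO hX (Metric.continuous_infDist_pt C), ?_⟩
    ext ω
    simp only [Set.mem_preimage, Set.mem_singleton_iff]
    exact hC.mem_iff_infDist_zero hne

lemma cozeroSet_preimage (hO : IsObsAlg o) (hX : X ∈ o) {U : Set ℝ} (hU : IsOpen U) :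
    IsCozeroSet o (X ⁻¹' U) := by
  unfold IsCozeroSet
  rw [← Set.preimage_compl]
  exact zeroSet_preimage hO hX hU.isClosed_compl

lemma P_empty (hO : IsObsAlg o) (hP : IsObsProb o P) (hX : X ∈ o) : P ∅ = 0 := by
  have h := hP.1 ∅ ∅ (Or.inl (zeroSet_empty hO hX)) (Or.inl (zeroSet_empty hO hX))
    (Set.disjoint_left.mpr fun x hx => absurd hx (Set.notMem_empty x))
    (by rw [Set.union_empty]; exact Or.inl (zeroSet_empty hO hX))
  rw [Set.union_empty] at h
  linarith

lemma P_mono_zero_cozero (hO : IsObsAlg o) (hP : IsObsProb o P) {F U : Set Ω}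
    (hF : IsZeroSet o F) (hU : IsCozeroSet o U) (hFU : F ⊆ U) : P F ≤ P U := by
  have hWcoz : IsCozeroSet o (U ∩ Fᶜ) := by
    rw [IsCozeroSet, Set.compl_inter, compl_compl]
    exact zeroSet_union hO hU hF
  have hdisj : Disjoint F (U ∩ Fᶜ) := Set.disjoint_left.mpr fun x hx hx' => hx'.2 hx
  have hun : F ∪ (U ∩ Fᶜ) = U := by
    ext x
    constructor
    · rintro (h | ⟨h, _⟩)
      exacts [hFU h, h]
    · intro h
      by_cases hxF : x ∈ F
      exacts [Or.inl hxF, Or.inr ⟨h, hxF⟩]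
  have h := hP.1 F (U ∩ Fᶜ) (Or.inl hF) (Or.inr hWcoz) hdisj
    (by rw [hun]; exact Or.inr hU)
  rw [hun] at h
  have h2 := hP.2.1 (U ∩ Fᶜ) (Or.inr hWcoz)
  linarith

lemma P_mono_cozero_zero (hO : IsObsAlg o) (hP : IsObsProb o P) {U F : Set Ω}
    (hU : IsCozeroSet o U) (hF : IsZeroSet o F) (hUF : U ⊆ F) : P U ≤ P F := by
  have hWzero : IsZeroSet o (F ∩ Uᶜ) := zeroSet_inter hO hF hU
  have hdisj : Disjoint U (F ∩ Uᶜ) := Set.disjoint_left.mpr fun x hx hx' => hx'.2 hx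
  have hun : U ∪ (F ∩ Uᶜ) = F := by
    ext x
    constructor
    · rintro (h | ⟨h, _⟩)
      exacts [hUF h, h]
    · intro h
      by_cases hxU : x ∈ U
      exacts [Or.inl hxU, Or.inr ⟨h, hxU⟩]
  have h := hP.1 U (F ∩ Uᶜ) (Or.inr hU) (Or.inl hWzero) hdisj
    (by rw [hun]; exact Or.inl hF)
  rw [hun] at h
  have h2 := hP.2.1 (F ∩ Uᶜ) (Or.inl hWzero)
  linarith

lemma P_compl (hO : IsObsAlg o) (hP : IsObsProb o P) (hX : X ∈ o) {A : Set Ω}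
    (hA : IsObsSet o A) : P A + P Aᶜ = 1 := by
  have h := hP.1 A Aᶜ hA (obsSet_compl hA) disjoint_compl_right
    (by rw [Set.union_compl_self]; exact Or.inl (zeroSet_univ hO hX))
  rw [Set.union_compl_self] at h
  have h2 := hP.2.2.1
  linarith

lemma Q_mono_co (hO : IsObsAlg o) (hP : IsObsProb o P) (hX : X ∈ o) {C U : Set ℝ}
    (hC : IsClosed C) (hU : IsOpen U) (h : C ⊆ U) : P (X ⁻¹' C) ≤ P (X ⁻¹' U) :=
  P_mono_zero_cozero hO hP (zeroSet_preimage hO hX hC) (cozeroSet_preimage hO hX hU)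
    (Set.preimage_mono h)

lemma Q_mono_oc (hO : IsObsAlg o) (hP : IsObsProb o P) (hX : X ∈ o) {U C : Set ℝ}
    (hU : IsOpen U) (hC : IsClosed C) (h : U ⊆ C) : P (X ⁻¹' U) ≤ P (X ⁻¹' C) :=
  P_mono_cozero_zero hO hP (cozeroSet_preimage hO hX hU) (zeroSet_preimage hO hX hC)
    (Set.preimage_mono h)

lemma Q_tendsto (hO : IsObsAlg o) (hP : IsObsProb o P) (hX : X ∈ o)
    {U : ℕ → Set ℝ} {V : Set ℝ} (hU : ∀ i, IsOpen (U i)) (hm : Monotone U)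
    (hV : IsOpen V) (hUV : (⋃ i, U i) = V) :
    Tendsto (fun i => P (X ⁻¹' U i)) atTop (𝓝 (P (X ⁻¹' V))) :=
  hP.2.2.2 (fun i => X ⁻¹' U i) (X ⁻¹' V)
    (fun i => cozeroSet_preimage hO hX (hU i))
    (fun _ _ h => Set.preimage_mono (hm h))
    (cozeroSet_preimage hO hX hV)
    (by rw [← Set.preimage_iUnion, hUV])

lemma Q_add (hO : IsObsAlg o) (hP : IsObsProb o P) (hX : X ∈ o)
    {A B : Set ℝ} (hA : IsOpen A) (hB : IsOpen B) (hd : Disjoint A B) :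
    P (X ⁻¹' (A ∪ B)) = P (X ⁻¹' A) + P (X ⁻¹' B) := by
  rw [Set.preimage_union]
  exact hP.1 _ _ (Or.inr (cozeroSet_preimage hO hX hA))
    (Or.inr (cozeroSet_preimage hO hX hB)) (hd.preimage X)
    (by rw [← Set.preimage_union]; exact Or.inr (cozeroSet_preimage hO hX (hA.union hB)))

end Aux

theorem existsUnique_distribution' {Ω : Type*} [Nonempty Ω]
    (o : Set (Ω → ℝ)) (hO : IsObsAlg o) (P : Set Ω → ℝ) (hP : IsObsProb o P)
    (X : Ω → ℝ) (hX : X ∈ o) :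
    ∃! μ : Measure ℝ, (IsProbabilityMeasure μ ∧
      ∀ U : Set ℝ, IsOpen U → μ U = ENNReal.ofReal (P (X ⁻¹' U))) := by
  classical
  have hQuniv : P (X ⁻¹' (Set.univ : Set ℝ)) = 1 := by
    rw [Set.preimage_univ]; exact hP.2.2.1
  have hQnn : ∀ U : Set ℝ, IsOpen U → 0 ≤ P (X ⁻¹' U) := fun U hU =>
    hP.2.1 _ (Or.inr (cozeroSet_preimage hO hX hU))
  have hQnnC : ∀ C : Set ℝ, IsClosed C → 0 ≤ P (X ⁻¹' C) := fun C hC =>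
    hP.2.1 _ (Or.inl (zeroSet_preimage hO hX hC))
  have hcomplIic : ∀ t : ℝ, P (X ⁻¹' Set.Iic t) = 1 - P (X ⁻¹' Set.Ioi t) := by
    intro t
    have h := P_compl hO hP hX (A := X ⁻¹' Set.Iic t)
      (Or.inl (zeroSet_preimage hO hX isClosed_Iic))
    rw [← Set.preimage_compl, Set.compl_Iic] at h
    linarith
  have hcomplIio : ∀ t : ℝ, P (X ⁻¹' Set.Iio t) = 1 - P (X ⁻¹' Set.Ici t) := by
    intro t
    have h := P_compl hO hP hX (A := X ⁻¹' Set.Iio t)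
      (Or.inr (cozeroSet_preimage hO hX isOpen_Iio))
    rw [← Set.preimage_compl, Set.compl_Iio] at h
    linarith
  -- the monotone function g0
  have hg0mono : Monotone (fun t => P (X ⁻¹' Set.Iic t)) := by
    intro s t hst
    rcases eq_or_lt_of_le hst with rfl | h
    · exact le_refl _
    · calc P (X ⁻¹' Set.Iic s) ≤ P (X ⁻¹' Set.Iio t) :=
          Q_mono_co hO hP hX isClosed_Iic isOpen_Iio (fun x hx => Set.mem_Iio.2 (lt_of_le_of_lt (Set.mem_Iic.1 hx) h))
        _ ≤ P (X ⁻¹' Set.Iic t) :=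
          Q_mono_oc hO hP hX isOpen_Iio isClosed_Iic Set.Iio_subset_Iic_self
  have hIoiSeq : ∀ x : ℝ, Tendsto (fun n : ℕ => P (X ⁻¹' Set.Ioi (x + 1 / (n + 1)))) atTop
      (𝓝 (P (X ⁻¹' Set.Ioi x))) := by
    intro x
    refine Q_tendsto hO hP hX (fun n => isOpen_Ioi) ?_ isOpen_Ioi ?_
    · intro n m hnm
      apply Set.Ioi_subset_Ioi
      have h0 : (0:ℝ) < (n:ℝ) + 1 := by positivity
      have h1 : (1 : ℝ) / (m + 1) ≤ 1 / (n + 1) :=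
        one_div_le_one_div_of_le h0 (by exact_mod_cast Nat.succ_le_succ hnm)
      linarith
    · ext y
      simp only [Set.mem_iUnion, Set.mem_Ioi]
      constructor
      · rintro ⟨n, hn⟩
        have h0 : (0:ℝ) < 1 / ((n:ℝ) + 1) := by positivity
        linarith
      · intro hy
        obtain ⟨n, hn⟩ := exists_nat_one_div_lt (show (0:ℝ) < y - x by linarith)
        exact ⟨n, by linarith⟩
  have hrc : ∀ x : ℝ, ContinuousWithinAt (fun t => P (X ⁻¹' Set.Iic t)) (Set.Ici x) x := by
    intro x
    have hseq : Tendsto (fun n : ℕ => P (X ⁻¹' Set.Iic (x + 1 / (n + 1)))) atTop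
        (𝓝 (P (X ⁻¹' Set.Iic x))) := by
      simp only [hcomplIic]
      exact Tendsto.const_sub 1 (hIoiSeq x)
    have : Tendsto (fun t => P (X ⁻¹' Set.Iic t)) (𝓝[Set.Ici x] x)
        (𝓝 (P (X ⁻¹' Set.Iic x))) := by
      refine tendsto_order.2 ⟨fun a ha => ?_, fun a ha => ?_⟩
      · filter_upwards [self_mem_nhdsWithin] with t ht
        exact lt_of_lt_of_le ha (hg0mono ht)
      · obtain ⟨n, hn⟩ := ((tendsto_order.1 hseq).2 a ha).exists
        have hlt : x < x + 1 / ((n:ℝ) + 1) := by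
          have h0 : (0:ℝ) < 1 / ((n:ℝ) + 1) := by positivity
          linarith
        have hmem : Set.Ico x (x + 1 / ((n:ℝ) + 1)) ∈ 𝓝[Set.Ici x] x := by
          rw [← Set.Ici_inter_Iio]
          exact Filter.inter_mem self_mem_nhdsWithin
            (mem_nhdsWithin_of_mem_nhds (Iio_mem_nhds hlt))
        filter_upwards [hmem] with t ht
        exact lt_of_le_of_lt (hg0mono (le_of_lt ht.2)) hn
    exact this
  set g : StieltjesFunction ℝ := ⟨fun t => P (X ⁻¹' Set.Iic t), hg0mono, hrc⟩ with hgdef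
  -- limits at ±∞
  have hIioTop : Tendsto (fun n : ℕ => P (X ⁻¹' Set.Iio (n : ℝ))) atTop (𝓝 1) := by
    have h := Q_tendsto hO hP hX (U := fun n : ℕ => Set.Iio (n:ℝ)) (V := Set.univ)
      (fun n => isOpen_Iio)
      (fun n m hnm => Set.Iio_subset_Iio (by exact_mod_cast hnm)) isOpen_univ
      (by ext y
          simp only [Set.mem_iUnion, Set.mem_Iio, Set.mem_univ, iff_true]
          exact exists_nat_gt y)
    rwa [hQuniv] at h
  have hIoiBot : Tendsto (fun n : ℕ => P (X ⁻¹' Set.Ioi (-(n : ℝ)))) atTop (𝓝 1) := by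
    have h := Q_tendsto hO hP hX (U := fun n : ℕ => Set.Ioi (-(n:ℝ))) (V := Set.univ)
      (fun n => isOpen_Ioi)
      (fun n m hnm => Set.Ioi_subset_Ioi (neg_le_neg (by exact_mod_cast hnm))) isOpen_univ
      (by ext y
          simp only [Set.mem_iUnion, Set.mem_Ioi, Set.mem_univ, iff_true]
          obtain ⟨n, hn⟩ := exists_nat_gt (-y)
          exact ⟨n, by linarith⟩)
    rwa [hQuniv] at h
  have hgle1 : ∀ t : ℝ, P (X ⁻¹' Set.Iic t) ≤ 1 := fun t => by
    rw [← hQuniv]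
    exact Q_mono_co hO hP hX isClosed_Iic isOpen_univ (Set.subset_univ _)
  have hgtop : Tendsto (fun t => P (X ⁻¹' Set.Iic t)) atTop (𝓝 1) := by
    refine tendsto_order.2 ⟨fun a ha => ?_, fun a ha => ?_⟩
    · obtain ⟨n, hn⟩ := ((tendsto_order.1 hIioTop).1 a ha).exists
      filter_upwards [Filter.eventually_ge_atTop ((n:ℝ))] with t ht
      calc a < P (X ⁻¹' Set.Iio (n:ℝ)) := hn
        _ ≤ P (X ⁻¹' Set.Iic t) :=
          Q_mono_oc hO hP hX isOpen_Iio isClosed_Iic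
            (fun x hx => Set.mem_Iic.2 (le_trans (le_of_lt (Set.mem_Iio.1 hx)) ht))
    · filter_upwards with t
      exact lt_of_le_of_lt (hgle1 t) ha
  have hgbot : Tendsto (fun t => P (X ⁻¹' Set.Iic t)) atBot (𝓝 0) := by
    refine tendsto_order.2 ⟨fun a ha => ?_, fun a ha => ?_⟩
    · filter_upwards with t
      exact lt_of_lt_of_le ha (hQnnC _ isClosed_Iic)
    · obtain ⟨n, hn⟩ := ((tendsto_order.1 hIoiBot).1 (1 - a) (by linarith)).exists
      filter_upwards [Filter.eventually_le_atBot (-(n:ℝ) - 1)] with t ht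
      have h1 : P (X ⁻¹' Set.Iic t) ≤ P (X ⁻¹' Set.Iio (-(n:ℝ))) :=
        Q_mono_co hO hP hX isClosed_Iic isOpen_Iio
          (fun x hx => Set.mem_Iio.2 (lt_of_le_of_lt (le_trans (Set.mem_Iic.1 hx) ht) (by linarith)))
      have h2 : P (X ⁻¹' Set.Ioi (-(n:ℝ))) ≤ P (X ⁻¹' Set.Ici (-(n:ℝ))) :=
        Q_mono_oc hO hP hX isOpen_Ioi isClosed_Ici Set.Ioi_subset_Ici_self
      have h3 := hcomplIio (-(n:ℝ))
      linarith
  haveI hprob : IsProbabilityMeasure g.measure := g.isProbabilityMeasure hgbot hgtop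
  -- left limits of g
  have hleft : ∀ b : ℝ, Function.leftLim (⇑g) b = P (X ⁻¹' Set.Iio b) := by
    intro b
    have hub : Tendsto (fun n : ℕ => P (X ⁻¹' Set.Iio (b - 1 / (n + 1)))) atTop
        (𝓝 (P (X ⁻¹' Set.Iio b))) := by
      refine Q_tendsto hO hP hX (fun n => isOpen_Iio) ?_ isOpen_Iio ?_
      · intro n m hnm
        apply Set.Iio_subset_Iio
        have h0 : (0:ℝ) < (n:ℝ) + 1 := by positivity
        have h1 : (1 : ℝ) / (m + 1) ≤ 1 / (n + 1) :=
          one_div_le_one_div_of_le h0 (by exact_mod_cast Nat.succ_le_succ hnm)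
        linarith
      · ext y
        simp only [Set.mem_iUnion, Set.mem_Iio]
        constructor
        · rintro ⟨n, hn⟩
          have h0 : (0:ℝ) < 1 / ((n:ℝ) + 1) := by positivity
          linarith
        · intro hy
          obtain ⟨n, hn⟩ := exists_nat_one_div_lt (show (0:ℝ) < b - y by linarith)
          exact ⟨n, by linarith⟩
    have hsq : Tendsto (fun n : ℕ => g (b - 1 / (n + 1))) atTop
        (𝓝 (P (X ⁻¹' Set.Iio b))) := by
      refine tendsto_of_tendsto_of_tendsto_of_le_of_le hub tendsto_const_nhds ?_ ?_
      · intro n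
        exact Q_mono_oc hO hP hX isOpen_Iio isClosed_Iic Set.Iio_subset_Iic_self
      · intro n
        have h0 : (0:ℝ) < 1 / ((n:ℝ) + 1) := by positivity
        exact Q_mono_co hO hP hX isClosed_Iic isOpen_Iio
          (fun x hx => Set.mem_Iio.2 (lt_of_le_of_lt (Set.mem_Iic.1 hx) (by linarith)))
    have hseqlt : Tendsto (fun n : ℕ => b - 1 / ((n:ℝ) + 1)) atTop (𝓝[<] b) := by
      apply tendsto_nhdsWithin_of_tendsto_nhds_of_eventually_within
      · have h := Tendsto.const_sub b tendsto_one_div_add_atTop_nhds_zero_nat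
        simpa using h
      · filter_upwards with n
        have h0 : (0:ℝ) < 1 / ((n:ℝ) + 1) := by positivity
        simp only [Set.mem_Iio]
        linarith
    exact tendsto_nhds_unique ((g.mono.tendsto_leftLim b).comp hseqlt) hsq
  -- measure of open intervals
  have hIoo : ∀ a b : ℝ, g.measure (Set.Ioo a b) = ENNReal.ofReal (P (X ⁻¹' Set.Ioo a b)) := by
    intro a b
    by_cases hab : a < b
    · rw [StieltjesFunction.measure_Ioo, hleft b]
      have hun : Set.Iic a ∪ Set.Ioo a b = Set.Iio b := by
        ext x
        simp only [Set.mem_union, Set.mem_Iic, Set.mem_Ioo, Set.mem_Iio]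
        constructor
        · rintro (h | ⟨_, h⟩)
          · exact lt_of_le_of_lt h hab
          · exact h
        · intro h
          rcases le_or_gt x a with h' | h'
          · exact Or.inl h'
          · exact Or.inr ⟨h', h⟩
      have hdisj : Disjoint (Set.Iic a) (Set.Ioo a b) :=
        Set.disjoint_left.mpr fun x hx hx' => absurd hx'.1 (not_lt.2 hx)
      have hadd : P (X ⁻¹' Set.Iio b) = P (X ⁻¹' Set.Iic a) + P (X ⁻¹' Set.Ioo a b) := by
        have h := hP.1 (X ⁻¹' Set.Iic a) (X ⁻¹' Set.Ioo a b)
          (Or.inl (zeroSet_preimage hO hX isClosed_Iic))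
          (Or.inr (cozeroSet_preimage hO hX isOpen_Ioo))
          (hdisj.preimage X)
          (by rw [← Set.preimage_union, hun]
              exact Or.inr (cozeroSet_preimage hO hX isOpen_Iio))
        rw [← Set.preimage_union, hun] at h
        exact h
      have hga : g a = P (X ⁻¹' Set.Iic a) := rfl
      rw [hga, hadd]
      congr 1
      ring
    · rw [Set.Ioo_eq_empty hab]
      have he : X ⁻¹' (∅ : Set ℝ) = ∅ := Set.preimage_empty
      rw [measure_empty, he, P_empty hO hP hX]
      simp
  -- list union machinery
  have hcons : ∀ (q : ℝ × ℝ) (M : List (ℝ × ℝ)),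
      (⋃ p ∈ (q :: M), Set.Ioo p.1 p.2) = Set.Ioo q.1 q.2 ∪ ⋃ p ∈ M, Set.Ioo p.1 p.2 := by
    intro q M
    ext x
    simp [List.mem_cons, exists_eq_or_imp]
  have hperm : ∀ (L₁ L₂ : List (ℝ × ℝ)), L₁.Perm L₂ →
      (⋃ p ∈ L₁, Set.Ioo p.1 p.2) = ⋃ p ∈ L₂, Set.Ioo p.1 p.2 := by
    intro L₁ L₂ h
    ext x
    simp only [Set.mem_iUnion, exists_prop]
    exact exists_congr fun p => and_congr_left fun _ => h.mem_iff
  have hopenL : ∀ L : List (ℝ × ℝ), IsOpen (⋃ p ∈ L, Set.Ioo p.1 p.2) :=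
    fun L => isOpen_biUnion fun _ _ => isOpen_Ioo
  have key : ∀ (n : ℕ) (L : List (ℝ × ℝ)), L.length ≤ n →
      g.measure (⋃ p ∈ L, Set.Ioo p.1 p.2)
        = ENNReal.ofReal (P (X ⁻¹' ⋃ p ∈ L, Set.Ioo p.1 p.2)) := by
    intro n
    induction n with
    | zero =>
      intro L hL
      have hnil : L = [] := List.eq_nil_of_length_eq_zero (Nat.le_zero.1 hL)
      subst hnil
      have he : (⋃ p ∈ ([] : List (ℝ × ℝ)), Set.Ioo p.1 p.2) = ∅ := by simp
      rw [he, measure_empty, Set.preimage_empty, P_empty hO hP hX]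
      simp
    | succ n ih =>
      intro L hL
      cases L with
      | nil =>
        have he : (⋃ p ∈ ([] : List (ℝ × ℝ)), Set.Ioo p.1 p.2) = ∅ := by simp
        rw [he, measure_empty, Set.preimage_empty, P_empty hO hP hX]
        simp
      | cons p T =>
        rw [hcons]
        by_cases hd : ∀ q ∈ T, Disjoint (Set.Ioo p.1 p.2) (Set.Ioo q.1 q.2)
        · have hdisj : Disjoint (Set.Ioo p.1 p.2) (⋃ q ∈ T, Set.Ioo q.1 q.2) := by
            simp only [Set.disjoint_iUnion_right]
            exact fun q hq => hd q hq
          have hTlen : T.length ≤ n := by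
            simp only [List.length_cons] at hL
            omega
          rw [measure_union hdisj (hopenL T).measurableSet, ih T hTlen, hIoo p.1 p.2,
            ← ENNReal.ofReal_add (hQnn _ isOpen_Ioo) (hQnn _ (hopenL T))]
          congr 1
          exact (Q_add hO hP hX isOpen_Ioo (hopenL T) hdisj).symm
        · push_neg at hd
          obtain ⟨q, hqT, hnd⟩ := hd
          obtain ⟨x, hx1, hx2⟩ := Set.not_disjoint_iff.1 hnd
          have hm : Set.Ioo p.1 p.2 ∪ Set.Ioo q.1 q.2
              = Set.Ioo (min p.1 q.1) (max p.2 q.2) :=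
            Set.Ioo_union_Ioo' (lt_trans hx2.1 hx1.2) (lt_trans hx1.1 hx2.2)
          have hMlen : (((min p.1 q.1, max p.2 q.2) : ℝ × ℝ) :: (T.erase q)).length ≤ n := by
            have h1 : ((T.erase q)).length + 1 = T.length := List.length_erase_add_one hqT
            simp only [List.length_cons] at hL ⊢
            omega
          have hueq : Set.Ioo p.1 p.2 ∪ ⋃ r ∈ T, Set.Ioo r.1 r.2
              = ⋃ r ∈ (((min p.1 q.1, max p.2 q.2) : ℝ × ℝ) :: (T.erase q)), Set.Ioo r.1 r.2 := by
            rw [hperm T (q :: (T.erase q)) (List.perm_cons_erase hqT), hcons, hcons,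
              ← Set.union_assoc, hm]
          rw [hueq]
          exact ih _ hMlen
  -- equality on all open sets
  have hopeneq : ∀ U : Set ℝ, IsOpen U → g.measure U = ENNReal.ofReal (P (X ⁻¹' U)) := by
    intro U hU
    obtain ⟨pr, hJU, hcov⟩ : ∃ pr : ℕ → ℝ × ℝ,
        (∀ n, Set.Ioo (pr n).1 (pr n).2 ⊆ U) ∧
          ∀ x ∈ U, ∃ n, x ∈ Set.Ioo (pr n).1 (pr n).2 := by
      refine ⟨fun n =>
        if Set.Ioo ((((Denumerable.eqv (ℚ × ℚ)).symm n).1 : ℚ) : ℝ)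
            ((((Denumerable.eqv (ℚ × ℚ)).symm n).2 : ℚ) : ℝ) ⊆ U
        then (((((Denumerable.eqv (ℚ × ℚ)).symm n).1 : ℚ) : ℝ),
          ((((Denumerable.eqv (ℚ × ℚ)).symm n).2 : ℚ) : ℝ))
        else (0, 0), ?_, ?_⟩
      · intro n
        dsimp only
        split_ifs with h
        · simpa using h
        · simp
      · intro x hx
        dsimp only
        obtain ⟨ε, hε, hball⟩ := Metric.isOpen_iff.1 hU x hx
        have hball' : Set.Ioo (x - ε) (x + ε) ⊆ U := by
          rw [← Real.ball_eq_Ioo]; exact hball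
        obtain ⟨a, ha1, ha2⟩ := exists_rat_btwn (show x - ε < x by linarith)
        obtain ⟨b, hb1, hb2⟩ := exists_rat_btwn (show x < x + ε by linarith)
        have hsub : Set.Ioo ((a : ℚ) : ℝ) ((b : ℚ) : ℝ) ⊆ U := fun y hy =>
          hball' ⟨lt_trans ha1 hy.1, lt_trans hy.2 hb2⟩
        refine ⟨Denumerable.eqv (ℚ × ℚ) (a, b), ?_⟩
        simp only [Equiv.symm_apply_apply]
        rw [if_pos hsub]
        exact ⟨ha2, hb1⟩
    set W : ℕ → Set ℝ := fun m => ⋃ n ∈ Finset.range m, Set.Ioo (pr n).1 (pr n).2 with hW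
    have hWopen : ∀ m, IsOpen (W m) := fun m => isOpen_biUnion fun _ _ => isOpen_Ioo
    have hWmono : Monotone W := by
      intro m₁ m₂ h x hx
      simp only [hW, Set.mem_iUnion, Finset.mem_range, exists_prop] at hx ⊢
      obtain ⟨n, hn, hxn⟩ := hx
      exact ⟨n, lt_of_lt_of_le hn h, hxn⟩
    have hWU : (⋃ m, W m) = U := by
      ext x
      simp only [hW, Set.mem_iUnion, Finset.mem_range, exists_prop]
      constructor
      · rintro ⟨m, n, hn, hxn⟩
        exact hJU n hxn
      · intro hx
        obtain ⟨n, hn⟩ := hcov x hx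
        exact ⟨n + 1, n, Nat.lt_succ_self n, hn⟩
    have hQW : Tendsto (fun m => P (X ⁻¹' W m)) atTop (𝓝 (P (X ⁻¹' U))) :=
      Q_tendsto hO hP hX hWopen hWmono hU hWU
    have hμW : Tendsto (fun m => g.measure (W m)) atTop (𝓝 (g.measure U)) := by
      have h := tendsto_measure_iUnion_atTop (μ := g.measure) hWmono
      rwa [hWU] at h
    have hWkey : ∀ m, g.measure (W m) = ENNReal.ofReal (P (X ⁻¹' W m)) := by
      intro m
      have hlist : W m = ⋃ p ∈ (List.range m).map pr, Set.Ioo p.1 p.2 := by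
        ext x
        simp only [hW, Set.mem_iUnion, Finset.mem_range, List.mem_map, List.mem_range,
          exists_prop]
        constructor
        · rintro ⟨n, hn, hxn⟩
          exact ⟨pr n, ⟨n, hn, rfl⟩, hxn⟩
        · rintro ⟨r, ⟨n, hn, rfl⟩, hxq⟩
          exact ⟨n, hn, hxq⟩
      rw [hlist]
      exact key ((List.range m).map pr).length _ le_rfl
    have h1 : Tendsto (fun m => g.measure (W m)) atTop
        (𝓝 (ENNReal.ofReal (P (X ⁻¹' U)))) := by
      simp only [hWkey]
      exact (ENNReal.continuous_ofReal.tendsto _).comp hQW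
    exact tendsto_nhds_unique hμW h1
  refine ⟨g.measure, ⟨hprob, hopeneq⟩, ?_⟩
  intro ν hν
  haveI := hν.1
  refine ext_of_generate_finite {s : Set ℝ | IsOpen s} ?_ ?_ ?_ ?_
  · exact BorelSpace.measurable_eq
  · intro s hs t ht _
    simp only [Set.mem_setOf_eq] at hs ht ⊢
    exact hs.inter ht
  · intro s hs
    rw [hν.2 s hs, hopeneq s hs]
  · rw [hν.1.measure_univ, hprob.measure_univ]

/-- every observable has a unique distribution: a Borel probability
measure `μ` on `ℝ` with `μ U = P (X ⁻¹' U)` for all open `U`. -/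
theorem existsUnique_distribution {Ω : Type*} [Nonempty Ω]
    (o : Set (Ω → ℝ)) (hO : IsObsAlg o) (P : Set Ω → ℝ) (hP : IsObsProb o P)
    (X : Ω → ℝ) (hX : X ∈ o) :
    ∃! μ : Measure ℝ, IsDistribution o P X μ := by
  unfold IsDistribution
  exact existsUnique_distribution' o hO P hP X hX
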